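/- Let y be uniformly distributed on the sphere of radius R in ℝⁿ centered at the origin, and let ỹ be obtained from y by rounding each coordinate to a multiple of δ (so ‖ỹ − y‖_∞ ≤ δ). Then for any fixed nonzero vector a ∈ ℝⁿ with entries in [−2, 2] and aᵀ𝟙 = 0, the probability that aᵀ ỹ = 0 is at most 2δn²/(‖a‖₂ R). -/

import Mathlib

open MeasureTheory

open Real RealInnerProductSpace

lemma gamma_half_le (x : ℝ) (hx : 1 ≤ x) : Gamma x ≤ 2 * Real.sqrt π * Gamma (x + 1/2) := by
  have h0 : (0:ℝ) < x - 1/2 := by linarith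
  have ha : 0 < Gamma (x - 1/2) := Gamma_pos_of_pos h0
  have hb : 0 < Gamma (x + 1/2) := Gamma_pos_of_pos (by linarith)
  have hxp : 0 < Gamma x := Gamma_pos_of_pos (by linarith)
  have hmid : Real.log (Gamma x) ≤ (Real.log (Gamma (x - 1/2)) + Real.log (Gamma (x + 1/2))) / 2 := by
    have h := convexOn_log_Gamma.2 (Set.mem_Ioi.mpr h0)
      (Set.mem_Ioi.mpr (by linarith : (0:ℝ) < x + 1/2))
      (by norm_num : (0:ℝ) ≤ 1/2) (by norm_num : (0:ℝ) ≤ 1/2) (by norm_num)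
    simp only [Function.comp, smul_eq_mul] at h
    have hx' : 1/2 * (x - 1/2) + 1/2 * (x + 1/2) = x := by ring
    rw [hx'] at h
    linarith
  have hsq : Gamma x ^ 2 ≤ Gamma (x - 1/2) * Gamma (x + 1/2) := by
    have h1 : Real.log (Gamma x ^ 2) ≤ Real.log (Gamma (x - 1/2) * Gamma (x + 1/2)) := by
      rw [Real.log_pow, Real.log_mul (ne_of_gt ha) (ne_of_gt hb)]
      push_cast
      linarith
    exact (Real.log_le_log_iff (by positivity) (by positivity)).mp h1
  have h4 : (x - 1/2) * Gamma (x - 1/2) = Gamma (x + 1/2) := by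
    have h := Real.Gamma_add_one (ne_of_gt h0)
    rw [show x - 1/2 + 1 = x + 1/2 by ring] at h
    linarith [h]
  have hga : Gamma (x - 1/2) ≤ 2 * Gamma (x + 1/2) := by
    nlinarith
  have h3 : Gamma x ^ 2 ≤ 2 * Gamma (x + 1/2) ^ 2 := by nlinarith
  have hπ : 1 ≤ Real.sqrt π := by
    rw [show (1:ℝ) = Real.sqrt 1 by simp]
    exact Real.sqrt_le_sqrt (by linarith [pi_gt_three])
  nlinarith [Real.sq_sqrt pi_pos.le, pi_gt_three, mul_pos hb hb, mul_pos hxp hb,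
    sq_nonneg (Gamma x - 2 * Real.sqrt π * Gamma (x + 1/2))]

lemma ball_ratio (m : ℕ) (hm : 1 ≤ m) :
    volume (Metric.closedBall (0 : EuclideanSpace ℝ (Fin m)) 1) ≤
      (m + 1 : ℕ) * volume (Metric.ball (0 : EuclideanSpace ℝ (Fin (m+1))) 1) := by
  have : Nonempty (Fin m) := ⟨⟨0, hm⟩⟩
  rw [EuclideanSpace.volume_closedBall, EuclideanSpace.volume_ball]
  simp only [Fintype.card_fin, ENNReal.ofReal_one, one_pow, one_mul]
  have hΓm : 0 < Gamma ((m : ℝ)/2 + 1) := Gamma_pos_of_pos (by positivity)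
  have hΓm1 : 0 < Gamma (((m:ℝ)+1)/2 + 1) := Gamma_pos_of_pos (by positivity)
  have hπ1 : (0:ℝ) < Real.sqrt π := Real.sqrt_pos.mpr pi_pos
  set x : ℝ := ((m:ℝ)+1)/2 with hxdef
  have hx1 : 1 ≤ x := by
    have : (1:ℝ) ≤ (m:ℝ) := by exact_mod_cast hm
    rw [hxdef]; linarith
  have hG : Gamma (((m:ℝ)+1)/2 + 1) ≤ ((m:ℝ)+1) * Real.sqrt π * Gamma ((m:ℝ)/2 + 1) := by
    have hadd : Gamma (((m:ℝ)+1)/2 + 1) = x * Gamma x := Real.Gamma_add_one (by linarith : x ≠ 0)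
    have hhalf : x + 1/2 = (m:ℝ)/2 + 1 := by rw [hxdef]; ring
    calc Gamma (((m:ℝ)+1)/2 + 1) = x * Gamma x := hadd
    _ ≤ x * (2 * Real.sqrt π * Gamma (x + 1/2)) :=
        mul_le_mul_of_nonneg_left (gamma_half_le x hx1) (by linarith)
    _ = ((m:ℝ)+1) * Real.sqrt π * Gamma ((m:ℝ)/2 + 1) := by rw [hhalf, hxdef]; ring
  have key : Real.sqrt π ^ m / Gamma ((m:ℝ)/2 + 1) ≤
      ((m:ℝ) + 1) * (Real.sqrt π ^ (m+1) / Gamma (((m:ℝ)+1)/2 + 1)) := by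
    rw [mul_div_assoc'] at *
    rw [div_le_div_iff₀ hΓm hΓm1]
    calc Real.sqrt π ^ m * Gamma (((m:ℝ)+1)/2 + 1)
        ≤ Real.sqrt π ^ m * (((m:ℝ)+1) * Real.sqrt π * Gamma ((m:ℝ)/2 + 1)) :=
          mul_le_mul_of_nonneg_left hG (by positivity)
    _ = ((m:ℝ)+1) * Real.sqrt π ^ (m+1) * Gamma ((m:ℝ)/2 + 1) := by rw [pow_succ]; ring
  calc ENNReal.ofReal (Real.sqrt π ^ m / Gamma ((m:ℝ)/2 + 1))
      ≤ ENNReal.ofReal (((m:ℝ)+1) * (Real.sqrt π ^ (m+1) / Gamma (((m:ℝ)+1)/2 + 1))) := by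
        apply ENNReal.ofReal_le_ofReal
        exact key
  _ = (m + 1 : ℕ) * ENNReal.ofReal (Real.sqrt π ^ (m+1) / Gamma (((m:ℝ)+1)/2 + 1)) := by
        rw [ENNReal.ofReal_mul (by positivity)]
        congr 1
        rw [show ((m:ℝ)+1) = ((m+1 : ℕ) : ℝ) by push_cast; ring, ENNReal.ofReal_natCast]
  _ = (m + 1 : ℕ) * ENNReal.ofReal (Real.sqrt π ^ (m+1) / Gamma (((m+1:ℕ):ℝ)/2 + 1)) := by
        norm_num

lemma euclid_sum_sq_set (m : ℕ) :
    (MeasurableEquiv.toLp 2 (Fin m → ℝ)).symm ⁻¹' {z : Fin m → ℝ | ∑ i, z i ^ 2 ≤ 1} =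
      Metric.closedBall (0 : EuclideanSpace ℝ (Fin m)) 1 := by
  ext v
  simp only [Set.mem_preimage, Set.mem_setOf_eq, Metric.mem_closedBall, dist_zero_right]
  have hcoe : ∀ i, (MeasurableEquiv.toLp 2 (Fin m → ℝ)).symm v i = v i := fun i => rfl
  simp only [hcoe]
  rw [EuclideanSpace.norm_eq]
  have hs : ∀ i, ‖v i‖ ^ 2 = v i ^ 2 := fun i => by rw [Real.norm_eq_abs, sq_abs]
  simp_rw [hs]
  constructor
  · intro h
    calc Real.sqrt (∑ i, v i ^ 2) ≤ Real.sqrt 1 := Real.sqrt_le_sqrt h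
    _ = 1 := Real.sqrt_one
  · intro h
    have h0 : (0:ℝ) ≤ ∑ i, v i ^ 2 := by positivity
    nlinarith [Real.sq_sqrt h0, Real.sqrt_nonneg (∑ i, v i ^ 2)]

lemma slab_coord (m : ℕ) (w : ℝ) (hw : 0 ≤ w) :
    volume {u : EuclideanSpace ℝ (Fin (m+1)) | ‖u‖ < 1 ∧ |u 0| ≤ w} ≤
      ENNReal.ofReal (2*w) * volume (Metric.closedBall (0 : EuclideanSpace ℝ (Fin m)) 1) := by
  set e := (MeasurableEquiv.toLp 2 (Fin (m+1) → ℝ)).symm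
  set A : Set (Fin (m+1) → ℝ) := {x | (∑ i, x i ^ 2 ≤ 1) ∧ |x 0| ≤ w} with hA
  have hAmeas : MeasurableSet A := by
    rw [hA, Set.setOf_and]
    exact (measurableSet_le (by fun_prop) measurable_const).inter
      (measurableSet_le (by fun_prop) measurable_const)
  have hsub : {u : EuclideanSpace ℝ (Fin (m+1)) | ‖u‖ < 1 ∧ |u 0| ≤ w} ⊆ e ⁻¹' A := by
    intro u hu
    obtain ⟨hu1, hu2⟩ := hu
    have hcoe : ∀ i, e u i = u i := fun i => rfl
    constructor
    · simp only [hcoe]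
      have hn : ‖u‖ = Real.sqrt (∑ i, u i ^ 2) := by
        rw [EuclideanSpace.norm_eq]
        congr 1
        exact Finset.sum_congr rfl fun i _ => by rw [Real.norm_eq_abs, sq_abs]
      have h0 : (0:ℝ) ≤ ∑ i, u i ^ 2 := by positivity
      nlinarith [Real.sq_sqrt h0, Real.sqrt_nonneg (∑ i, u i ^ 2), hn ▸ hu1]
    · simpa only [hcoe] using hu2
  have step1 : volume {u : EuclideanSpace ℝ (Fin (m+1)) | ‖u‖ < 1 ∧ |u 0| ≤ w} ≤ volume A := by
    calc volume {u : EuclideanSpace ℝ (Fin (m+1)) | ‖u‖ < 1 ∧ |u 0| ≤ w}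
        ≤ volume (e ⁻¹' A) := measure_mono hsub
    _ = volume A := (EuclideanSpace.volume_preserving_symm_measurableEquiv_toLp _).measure_preimage
        hAmeas.nullMeasurableSet
  set f := MeasurableEquiv.piFinSuccAbove (fun _ : Fin (m+1) => ℝ) 0
  set B' : Set (Fin m → ℝ) := {z | ∑ i, z i ^ 2 ≤ 1} with hB'
  have hsub2 : A ⊆ f ⁻¹' (Set.Icc (-w) w ×ˢ B') := by
    intro x hx
    obtain ⟨hx1, hx2⟩ := hx
    have hf : f x = (x 0, fun j : Fin m => x (Fin.succAbove 0 j)) := rfl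
    constructor
    · simp only [hf]
      exact abs_le.mp hx2
    · simp only [hf, hB', Set.mem_setOf_eq]
      have : ∑ j : Fin m, x (Fin.succAbove 0 j) ^ 2 = ∑ j : Fin m, x j.succ ^ 2 := by
        refine Finset.sum_congr rfl fun j _ => by rw [Fin.zero_succAbove]
      rw [this]
      have hsum := Fin.sum_univ_succ (fun i => x i ^ 2)
      nlinarith [sq_nonneg (x 0)]
  have hmeasB' : MeasurableSet (Set.Icc (-w) w ×ˢ B') := by
    apply MeasurableSet.prod measurableSet_Icc
    exact measurableSet_le (by fun_prop) measurable_const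
  have step2 : volume A ≤ ENNReal.ofReal (2*w) * volume B' := by
    calc volume A ≤ volume (f ⁻¹' (Set.Icc (-w) w ×ˢ B')) := measure_mono hsub2
    _ = (volume.prod volume) (Set.Icc (-w) w ×ˢ B') :=
        (volume_preserving_piFinSuccAbove (fun _ : Fin (m+1) => ℝ) 0).measure_preimage
          hmeasB'.nullMeasurableSet
    _ = volume (Set.Icc (-w) w) * volume B' := by
        rw [Measure.prod_prod]
    _ = ENNReal.ofReal (2*w) * volume B' := by
        rw [Real.volume_Icc]
        norm_num
        ring_nf
        rw [ENNReal.ofReal_mul hw, ENNReal.ofReal_ofNat]; ring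
  have hB'vol : volume B' = volume (Metric.closedBall (0 : EuclideanSpace ℝ (Fin m)) 1) := by
    rw [← euclid_sum_sq_set m]
    exact ((EuclideanSpace.volume_preserving_symm_measurableEquiv_toLp _).measure_preimage
      (measurableSet_le (by fun_prop) measurable_const).nullMeasurableSet).symm
  calc volume {u : EuclideanSpace ℝ (Fin (m+1)) | ‖u‖ < 1 ∧ |u 0| ≤ w} ≤ volume A := step1
  _ ≤ ENNReal.ofReal (2*w) * volume B' := step2
  _ = ENNReal.ofReal (2*w) * volume (Metric.closedBall (0 : EuclideanSpace ℝ (Fin m)) 1) := by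
      rw [hB'vol]

lemma swap_isometry {m : ℕ} (v w : EuclideanSpace ℝ (Fin m)) (h : ‖v‖ = ‖w‖) :
    ∃ f : EuclideanSpace ℝ (Fin m) ≃ₗᵢ[ℝ] EuclideanSpace ℝ (Fin m),
      ∀ u, ⟪w, f u⟫ = ⟪v, u⟫ := by
  refine ⟨Submodule.reflection (ℝ ∙ (v - w))ᗮ, fun u => ?_⟩
  have hv : Submodule.reflection (ℝ ∙ (v - w))ᗮ v = w := Submodule.reflection_sub h
  calc ⟪w, Submodule.reflection (ℝ ∙ (v - w))ᗮ u⟫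
      = ⟪Submodule.reflection (ℝ ∙ (v - w))ᗮ v, Submodule.reflection (ℝ ∙ (v - w))ᗮ u⟫ := by rw [hv]
  _ = ⟪v, u⟫ := LinearIsometryEquiv.inner_map_map _ _ _

lemma slab_dir (m : ℕ) (y : EuclideanSpace ℝ (Fin (m+1))) (hy : y ≠ 0) (w : ℝ) (hw : 0 ≤ w) :
    volume {u : EuclideanSpace ℝ (Fin (m+1)) | ‖u‖ < 1 ∧ |⟪y, u⟫| ≤ w * ‖y‖} ≤
      ENNReal.ofReal (2*w) * volume (Metric.closedBall (0 : EuclideanSpace ℝ (Fin m)) 1) := by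
  have hny : (0:ℝ) < ‖y‖ := norm_pos_iff.mpr hy
  set v : EuclideanSpace ℝ (Fin (m+1)) := ‖y‖⁻¹ • y with hv
  have hvn : ‖v‖ = ‖EuclideanSpace.single (0 : Fin (m+1)) (1:ℝ)‖ := by
    rw [EuclideanSpace.norm_single, hv, norm_smul, norm_inv, norm_norm]
    field_simp
    simp
  obtain ⟨f, hf⟩ := swap_isometry v (EuclideanSpace.single (0 : Fin (m+1)) (1:ℝ)) hvn
  have hset : {u : EuclideanSpace ℝ (Fin (m+1)) | ‖u‖ < 1 ∧ |⟪y, u⟫| ≤ w * ‖y‖} =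
      f ⁻¹' {u : EuclideanSpace ℝ (Fin (m+1)) | ‖u‖ < 1 ∧ |u 0| ≤ w} := by
    ext u
    simp only [Set.mem_setOf_eq, Set.mem_preimage]
    have h0 : (f u) 0 = ⟪EuclideanSpace.single (0 : Fin (m+1)) (1:ℝ), f u⟫ := by
      rw [EuclideanSpace.inner_single_left]
      simp
    rw [h0, hf u, f.norm_map]
    have hvy : ⟪v, u⟫ = ‖y‖⁻¹ * ⟪y, u⟫ := by rw [hv, real_inner_smul_left]
    rw [hvy]
    constructor
    · rintro ⟨h1, h2⟩
      refine ⟨h1, ?_⟩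
      rw [abs_mul, abs_of_pos (inv_pos.mpr hny)]
      rw [inv_mul_le_iff₀ hny] at *
      linarith [h2]
    · rintro ⟨h1, h2⟩
      refine ⟨h1, ?_⟩
      rw [abs_mul, abs_of_pos (inv_pos.mpr hny), inv_mul_le_iff₀ hny] at h2
      linarith [h2]
  rw [hset]
  have hmeas : MeasurableSet {u : EuclideanSpace ℝ (Fin (m+1)) | ‖u‖ < 1 ∧ |u 0| ≤ w} := by
    rw [Set.setOf_and]
    refine MeasurableSet.inter ?_ ?_
    · exact measurableSet_lt (continuous_norm.measurable) measurable_const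
    · exact measurableSet_le ((continuous_abs.comp (EuclideanSpace.proj
        (0 : Fin (m+1)) : EuclideanSpace ℝ (Fin (m+1)) →L[ℝ] ℝ).continuous).measurable)
        measurable_const
  rw [f.measurePreserving.measure_preimage hmeas.nullMeasurableSet]
  exact slab_coord m w hw

/-- Let `y` be uniform on the sphere of radius `R` in `ℝⁿ` (encoded as: a rotation-invariant
probability measure supported on the sphere), and let `ỹ` round each coordinate of `y` to a
multiple of `δ`. Then for any fixed nonzero `a` with `|a_i| ≤ 2` and `Σ a_i = 0`, the
probability that `aᵀ ỹ = 0` is at most `2δn²/(‖a‖₂ R)`. -/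
theorem stmt18 {n : ℕ} (hn : 2 ≤ n) (R δ : ℝ) (hR : 0 < R) (hδ : 0 < δ)
    (μ : Measure (EuclideanSpace ℝ (Fin n))) [IsProbabilityMeasure μ]
    (hsupp : ∀ᵐ y ∂μ, ‖y‖ = R)
    (hinv : ∀ f : EuclideanSpace ℝ (Fin n) ≃ₗᵢ[ℝ] EuclideanSpace ℝ (Fin n),
      Measure.map f μ = μ)
    (a : Fin n → ℝ) (ha : ∀ i, |a i| ≤ 2) (hsum : ∑ i, a i = 0) (hane : a ≠ 0) :
    (μ {y : EuclideanSpace ℝ (Fin n) |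
        ∑ i, a i * (δ * ((round (y i / δ) : ℤ) : ℝ)) = 0}).toReal ≤
      2 * δ * (n : ℝ) ^ 2 / (Real.sqrt (∑ i, a i ^ 2) * R) := by
  obtain ⟨m, rfl⟩ : ∃ m, n = m + 1 := ⟨n - 1, by omega⟩
  have hm : 1 ≤ m := by omega
  -- basic positivity
  have hsumpos : 0 < ∑ i, a i ^ 2 := by
    obtain ⟨i, hi⟩ := Function.ne_iff.mp hane
    exact Finset.sum_pos' (fun j _ => sq_nonneg _)
      ⟨i, Finset.mem_univ i, by simpa [sq_abs] using pow_pos (abs_pos.mpr hi) 2⟩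
  set N := Real.sqrt (∑ i, a i ^ 2) with hNdef
  have hN : 0 < N := Real.sqrt_pos.mpr hsumpos
  -- the vector a in EuclideanSpace
  set av : EuclideanSpace ℝ (Fin (m+1)) := (WithLp.equiv 2 (Fin (m+1) → ℝ)).symm a with havdef
  have hav_app : ∀ i, av i = a i := fun i => rfl
  have hav_inner : ∀ y : EuclideanSpace ℝ (Fin (m+1)), ⟪av, y⟫ = ∑ i, a i * y i := by
    intro y
    rw [PiLp.inner_apply]
    exact Finset.sum_congr rfl fun i _ => by
      rw [hav_app, RCLike.inner_apply, starRingEnd_apply, star_trivial, mul_comm]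
  have hav_norm : ‖av‖ = N := by
    rw [EuclideanSpace.norm_eq, hNdef]
    congr 1
    exact Finset.sum_congr rfl fun i _ => by rw [hav_app, Real.norm_eq_abs, sq_abs]
  set c : ℝ := ((m+1 : ℕ) : ℝ) * δ / N with hcdef
  have hc : 0 < c := by
    rw [hcdef]
    have : (0:ℝ) < ((m+1 : ℕ) : ℝ) := by positivity
    positivity
  set T : Set (EuclideanSpace ℝ (Fin (m+1))) := {y | |⟪av, y⟫| ≤ c * ‖av‖} with hTdef
  have hT_meas : MeasurableSet T := by
    apply measurableSet_le
    · exact (continuous_abs.comp (Continuous.inner continuous_const continuous_id)).measurable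
    · exact measurable_const
  -- Step 1: Event ⊆ T
  have hET : {y : EuclideanSpace ℝ (Fin (m+1)) |
      ∑ i, a i * (δ * ((round (y i / δ) : ℤ) : ℝ)) = 0} ⊆ T := by
    intro y hy
    simp only [Set.mem_setOf_eq] at hy ⊢
    have hcN : c * ‖av‖ = ((m+1:ℕ):ℝ) * δ := by
      rw [hav_norm, hcdef]; field_simp
    show |⟪av, y⟫| ≤ c * ‖av‖
    rw [hcN, hav_inner]
    have hterm : ∀ i, |a i * y i - a i * (δ * ((round (y i / δ) : ℤ) : ℝ))| ≤ δ := by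
      intro i
      have h1 : |y i - δ * ((round (y i / δ) : ℤ) : ℝ)| ≤ δ / 2 := by
        have h2 := abs_sub_round (y i / δ)
        have h3 : y i - δ * ((round (y i / δ) : ℤ) : ℝ) =
            δ * (y i / δ - ((round (y i / δ) : ℤ) : ℝ)) := by field_simp
        rw [h3, abs_mul, abs_of_pos hδ]
        nlinarith
      calc |a i * y i - a i * (δ * ((round (y i / δ) : ℤ) : ℝ))|
          = |a i| * |y i - δ * ((round (y i / δ) : ℤ) : ℝ)| := by
            rw [← abs_mul]; ring_nf
      _ ≤ 2 * (δ / 2) := mul_le_mul (ha i) h1 (abs_nonneg _) (by norm_num)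
      _ = δ := by ring
    calc |∑ i, a i * y i|
        = |∑ i, (a i * y i - a i * (δ * ((round (y i / δ) : ℤ) : ℝ)))| := by
          rw [Finset.sum_sub_distrib, hy, sub_zero]
    _ ≤ ∑ i, |a i * y i - a i * (δ * ((round (y i / δ) : ℤ) : ℝ))| :=
          Finset.abs_sum_le_sum_abs _ _
    _ ≤ ∑ _i : Fin (m+1), δ := Finset.sum_le_sum fun i _ => hterm i
    _ = ((m+1:ℕ):ℝ) * δ := by rw [Finset.sum_const, Finset.card_univ, Fintype.card_fin]; simp [nsmul_eq_mul]
  -- Step 2: rotation invariance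
  have hrot : ∀ u : EuclideanSpace ℝ (Fin (m+1)), u ≠ 0 →
      μ {y | |⟪u, y⟫| ≤ c * ‖u‖} = μ T := by
    intro u hu
    have hnu : (0:ℝ) < ‖u‖ := norm_pos_iff.mpr hu
    have hnav : (0:ℝ) < ‖av‖ := by rw [hav_norm]; exact hN
    have hnorm_eq : ‖(‖u‖⁻¹ • u : EuclideanSpace ℝ (Fin (m+1)))‖ = ‖(‖av‖⁻¹ • av : EuclideanSpace ℝ (Fin (m+1)))‖ := by
      rw [norm_smul, norm_smul, norm_inv, norm_norm, norm_inv, norm_norm]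
      field_simp
    obtain ⟨f, hf⟩ := swap_isometry (‖u‖⁻¹ • u) (‖av‖⁻¹ • av) hnorm_eq
    have hset : {y : EuclideanSpace ℝ (Fin (m+1)) | |⟪u, y⟫| ≤ c * ‖u‖} = f ⁻¹' T := by
      ext y
      simp only [Set.mem_setOf_eq, Set.mem_preimage, hTdef]
      have h1 : ⟪(‖av‖⁻¹ • av : EuclideanSpace ℝ (Fin (m+1))), f y⟫ = ⟪(‖u‖⁻¹ • u : EuclideanSpace ℝ (Fin (m+1))), y⟫ := hf y
      rw [real_inner_smul_left, real_inner_smul_left] at h1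
      constructor
      · intro h
        have h2 : |⟪u, y⟫| * ‖u‖⁻¹ ≤ c := by
          have h' := mul_le_mul_of_nonneg_right h (inv_nonneg.mpr hnu.le)
          rwa [mul_assoc, mul_inv_cancel₀ hnu.ne', mul_one] at h'
        have h3 : ‖av‖⁻¹ * ⟪av, f y⟫ = ‖u‖⁻¹ * ⟪u, y⟫ := h1
        have h4 : |⟪av, f y⟫| = ‖av‖ * (‖u‖⁻¹ * |⟪u, y⟫|) := by
          have : ⟪av, f y⟫ = ‖av‖ * (‖u‖⁻¹ * ⟪u, y⟫) := by
            field_simp at h3 ⊢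
            linarith [h3]
          rw [this, abs_mul, abs_mul, abs_of_pos hnav, abs_of_pos (inv_pos.mpr hnu)]
        rw [h4]
        calc ‖av‖ * (‖u‖⁻¹ * |⟪u, y⟫|) = (|⟪u, y⟫| * ‖u‖⁻¹) * ‖av‖ := by ring
        _ ≤ c * ‖av‖ := by
            apply mul_le_mul_of_nonneg_right h2 (le_of_lt hnav)
      · intro h
        have h2 : |⟪av, f y⟫| * ‖av‖⁻¹ ≤ c := by
          have h' := mul_le_mul_of_nonneg_right h (inv_nonneg.mpr hnav.le)
          rwa [mul_assoc, mul_inv_cancel₀ hnav.ne', mul_one] at h'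
        have h4 : |⟪u, y⟫| = ‖u‖ * (‖av‖⁻¹ * |⟪av, f y⟫|) := by
          have : ⟪u, y⟫ = ‖u‖ * (‖av‖⁻¹ * ⟪av, f y⟫) := by
            field_simp at h1 ⊢
            linarith [h1]
          rw [this, abs_mul, abs_mul, abs_of_pos hnu, abs_of_pos (inv_pos.mpr hnav)]
        rw [h4]
        calc ‖u‖ * (‖av‖⁻¹ * |⟪av, f y⟫|) = (|⟪av, f y⟫| * ‖av‖⁻¹) * ‖u‖ := by ring
        _ ≤ c * ‖u‖ := mul_le_mul_of_nonneg_right h2 (le_of_lt hnu)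
    rw [hset]
    calc μ (⇑f ⁻¹' T) = Measure.map f μ T :=
          (Measure.map_apply f.continuous.measurable hT_meas).symm
    _ = μ T := by rw [hinv f]
  -- Step 3: Fubini
  set B : Set (EuclideanSpace ℝ (Fin (m+1))) := Metric.ball 0 1 with hBdef
  set ν : Measure (EuclideanSpace ℝ (Fin (m+1))) := volume.restrict B with hνdef
  haveI hνfin : IsFiniteMeasure ν := by
    constructor
    rw [hνdef, Measure.restrict_apply_univ]
    exact measure_ball_lt_top
  set S : Set (EuclideanSpace ℝ (Fin (m+1)) × EuclideanSpace ℝ (Fin (m+1))) :=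
    {p | ‖p.1‖ < 1 ∧ |⟪p.1, p.2⟫| ≤ c * ‖p.1‖} with hSdef
  have hS_meas : MeasurableSet S := by
    rw [hSdef, Set.setOf_and]
    refine MeasurableSet.inter ?_ ?_
    · exact measurableSet_lt (continuous_norm.comp continuous_fst).measurable measurable_const
    · exact measurableSet_le
        (continuous_abs.comp (Continuous.inner continuous_fst continuous_snd)).measurable
        (continuous_const.mul (continuous_norm.comp continuous_fst)).measurable
  have hprod1 : (ν.prod μ) S = μ T * volume B := by
    rw [Measure.prod_apply hS_meas]
    have hae : ∀ᵐ u ∂ν, μ (Prod.mk u ⁻¹' S) = μ T := by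
      have h0 : ∀ᵐ u ∂ν, u ∈ B := ae_restrict_mem measurableSet_ball
      have h1 : ∀ᵐ u ∂ν, u ≠ (0 : EuclideanSpace ℝ (Fin (m+1))) := by
        rw [ae_iff]
        have hss : {u : EuclideanSpace ℝ (Fin (m+1)) | ¬ u ≠ 0} = {(0 : EuclideanSpace ℝ (Fin (m+1)))} := by
          ext u; simp
        rw [hss, hνdef, Measure.restrict_apply (measurableSet_singleton _)]
        exact measure_mono_null Set.inter_subset_left (measure_singleton _)
      filter_upwards [h0, h1] with u hu1 hu2
      have : Prod.mk u ⁻¹' S = {y | |⟪u, y⟫| ≤ c * ‖u‖} := by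
        ext y
        simp only [Set.mem_preimage, hSdef, Set.mem_setOf_eq]
        have : ‖u‖ < 1 := by simpa [hBdef] using hu1
        tauto
      rw [this, hrot u hu2]
    rw [lintegral_congr_ae hae, lintegral_const, hνdef, Measure.restrict_apply_univ]
  have hprod2 : (ν.prod μ) S ≤ ENNReal.ofReal (2 * (c / R)) *
      volume (Metric.closedBall (0 : EuclideanSpace ℝ (Fin m)) 1) := by
    rw [Measure.prod_apply_symm hS_meas]
    have hbound : ∀ᵐ y ∂μ, ν ((fun u => (u, y)) ⁻¹' S) ≤ ENNReal.ofReal (2 * (c / R)) *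
        volume (Metric.closedBall (0 : EuclideanSpace ℝ (Fin m)) 1) := by
      filter_upwards [hsupp] with y hy
      have hy0 : y ≠ 0 := by
        intro h; rw [h, norm_zero] at hy; linarith
      have hslice : (fun u => (u, y)) ⁻¹' S ⊆
          {u : EuclideanSpace ℝ (Fin (m+1)) | ‖u‖ < 1 ∧ |⟪y, u⟫| ≤ (c / R) * ‖y‖} := by
        intro u hu
        simp only [Set.mem_preimage, hSdef, Set.mem_setOf_eq] at hu ⊢
        obtain ⟨hu1, hu2⟩ := hu
        refine ⟨hu1, ?_⟩
        rw [real_inner_comm, hy]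
        calc |⟪u, y⟫| ≤ c * ‖u‖ := hu2
        _ ≤ c * 1 := by apply mul_le_mul_of_nonneg_left (le_of_lt hu1) (le_of_lt hc)
        _ = (c / R) * R := by field_simp
      calc ν ((fun u => (u, y)) ⁻¹' S) ≤ volume ((fun u => (u, y)) ⁻¹' S) :=
            Measure.restrict_le_self _
      _ ≤ volume {u : EuclideanSpace ℝ (Fin (m+1)) | ‖u‖ < 1 ∧ |⟪y, u⟫| ≤ (c / R) * ‖y‖} :=
            measure_mono hslice
      _ ≤ ENNReal.ofReal (2 * (c / R)) *
            volume (Metric.closedBall (0 : EuclideanSpace ℝ (Fin m)) 1) :=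
            slab_dir m y hy0 (c / R) (by positivity)
    calc ∫⁻ y, ν ((fun u => (u, y)) ⁻¹' S) ∂μ
        ≤ ∫⁻ _y, (ENNReal.ofReal (2 * (c / R)) *
          volume (Metric.closedBall (0 : EuclideanSpace ℝ (Fin m)) 1)) ∂μ :=
          lintegral_mono_ae hbound
    _ = ENNReal.ofReal (2 * (c / R)) *
          volume (Metric.closedBall (0 : EuclideanSpace ℝ (Fin m)) 1) := by
          rw [lintegral_const, measure_univ, mul_one]
  -- Step 4: combine
  have hBpos : volume B ≠ 0 := (Metric.measure_ball_pos volume 0 one_pos).ne'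
  have hBfin : volume B ≠ ⊤ := measure_ball_lt_top.ne
  have hcombined : μ T * volume B ≤
      (ENNReal.ofReal (2 * (c / R)) * (m + 1 : ℕ)) * volume B := by
    calc μ T * volume B = (ν.prod μ) S := hprod1.symm
    _ ≤ ENNReal.ofReal (2 * (c / R)) *
          volume (Metric.closedBall (0 : EuclideanSpace ℝ (Fin m)) 1) := hprod2
    _ ≤ ENNReal.ofReal (2 * (c / R)) * ((m + 1 : ℕ) * volume B) :=
          by gcongr; exact ball_ratio m hm
    _ = (ENNReal.ofReal (2 * (c / R)) * (m + 1 : ℕ)) * volume B := by rw [mul_assoc]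
  have hμT : μ T ≤ ENNReal.ofReal (2 * (c / R)) * (m + 1 : ℕ) :=
    (ENNReal.mul_le_mul_iff_left hBpos hBfin).mp hcombined
  have hfinal : μ {y : EuclideanSpace ℝ (Fin (m+1)) |
      ∑ i, a i * (δ * ((round (y i / δ) : ℤ) : ℝ)) = 0} ≤
      ENNReal.ofReal (2 * (c / R)) * (m + 1 : ℕ) :=
    le_trans (measure_mono hET) hμT
  have hne : ENNReal.ofReal (2 * (c / R)) * ((m : ℕ) + 1 : ℕ) ≠ ⊤ :=
    ENNReal.mul_ne_top ENNReal.ofReal_ne_top (ENNReal.natCast_ne_top _)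
  have htr := ENNReal.toReal_mono hne hfinal
  rw [ENNReal.toReal_mul, ENNReal.toReal_ofReal (by positivity), ENNReal.toReal_natCast] at htr
  refine le_trans htr (le_of_eq ?_)
  rw [hcdef, hNdef]
  push_cast
  field_simp
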